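/- Any weighted bipartite graph with nonnegative edge weights and arbitrary edge costs can be modified, by iteratively shifting weights around cycles, into an acyclic weighted graph (i.e., the support of the weights contains no cycle) without decreasing the total weighted cost Σ x_{ij} c_{ij} and without changing the weighted degree m_v = Σ_{j} x_{vj} of any vertex v. -/

import Mathlib

open Finset

namespace Stmt3Aux

variable {L R : Type} {G : SimpleGraph (L ⊕ R)}

open Classical in
noncomputable def gfun (i : L) (j : R) (p : (L ⊕ R) × (L ⊕ R)) : ℝ :=
  (if p = (Sum.inl i, Sum.inr j) then 1 else 0)
  - (if p = (Sum.inr j, Sum.inl i) then 1 else 0)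

lemma gfun_ne_zero {i : L} {j : R} {p : (L ⊕ R) × (L ⊕ R)} (h : gfun i j p ≠ 0) :
    (p = (Sum.inl i, Sum.inr j) ∧ gfun i j p = 1) ∨
    (p = (Sum.inr j, Sum.inl i) ∧ gfun i j p = -1) := by
  classical
  unfold gfun at *
  by_cases h1 : p = (Sum.inl i, Sum.inr j)
  · left
    refine ⟨h1, ?_⟩
    have h2 : p ≠ (Sum.inr j, Sum.inl i) := by
      rw [h1]; intro hh; exact (Sum.inl_ne_inr (Prod.ext_iff.mp hh).1)
    simp [h1, h2]
  · by_cases h2 : p = (Sum.inr j, Sum.inl i)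
    · right; refine ⟨h2, ?_⟩; simp [h1, h2]
    · exfalso; apply h; simp [h1, h2]

lemma gfun_edge {i : L} {j : R} {p : (L ⊕ R) × (L ⊕ R)} (h : gfun i j p ≠ 0) :
    Sym2.mk p.1 p.2 = s(Sum.inl i, Sum.inr j) := by
  rcases gfun_ne_zero h with ⟨h1, _⟩ | ⟨h1, _⟩
  · rw [h1]
  · rw [h1]; exact Sym2.eq_swap

lemma dart_edge (dd : G.Dart) : dd.edge = Sym2.mk dd.toProd.1 dd.toProd.2 := rfl

noncomputable def lsum (i : L) (j : R) (l : List G.Dart) : ℝ :=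
  (l.map (fun dd => gfun i j dd.toProd)).sum

lemma lsum_cons (i : L) (j : R) (dd : G.Dart) (l : List G.Dart) :
    lsum i j (dd :: l) = gfun i j dd.toProd + lsum i j l := by
  simp [lsum]

-- if no dart matches, sum is 0; key: head edge not in rest
lemma lsum_eq_zero {i : L} {j : R} {l : List G.Dart}
    (h : ∀ dd ∈ l, dd.edge ≠ s(Sum.inl i, Sum.inr j)) : lsum i j l = 0 := by
  induction l with
  | nil => simp [lsum]
  | cons dd l ih =>
    rw [lsum_cons]
    have h1 : gfun i j dd.toProd = 0 := by
      by_contra hh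
      exact h dd List.mem_cons_self (gfun_edge hh)
    rw [h1, ih (fun e he => h e (List.mem_cons_of_mem _ he)), add_zero]

lemma lsum_trichotomy (i : L) (j : R) (l : List G.Dart)
    (hnd : (l.map SimpleGraph.Dart.edge).Nodup) :
    lsum i j l = 0 ∨ lsum i j l = 1 ∨ lsum i j l = -1 := by
  induction l with
  | nil => left; simp [lsum]
  | cons dd l ih =>
    rw [List.map_cons, List.nodup_cons] at hnd
    rw [lsum_cons]
    by_cases h0 : gfun i j dd.toProd = 0
    · rw [h0, zero_add]; exact ih hnd.2
    · have hz : lsum i j l = 0 := by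
        apply lsum_eq_zero
        intro e he heq
        apply hnd.1
        have : dd.edge = e.edge := by rw [dart_edge, dart_edge, gfun_edge h0, ← heq, dart_edge]
        rw [this]
        exact List.mem_map_of_mem he
      rw [hz, add_zero]
      rcases gfun_ne_zero h0 with ⟨_, h1⟩ | ⟨_, h1⟩
      · right; left; exact h1
      · right; right; exact h1

lemma lsum_eq_of_mem {i : L} {j : R} {l : List G.Dart} {dd : G.Dart}
    (hmem : dd ∈ l) (hnd : (l.map SimpleGraph.Dart.edge).Nodup)
    (h0 : gfun i j dd.toProd ≠ 0) :
    lsum i j l = gfun i j dd.toProd := by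
  induction l with
  | nil => exact absurd hmem List.not_mem_nil
  | cons e l ih =>
    rw [List.map_cons, List.nodup_cons] at hnd
    rw [lsum_cons]
    rcases List.mem_cons.mp hmem with rfl | hmem'
    · have hz : lsum i j l = 0 := by
        apply lsum_eq_zero
        intro e' he' heq
        apply hnd.1
        have : dd.edge = e'.edge := by rw [dart_edge, dart_edge, gfun_edge h0, ← heq, dart_edge]
        rw [this]
        exact List.mem_map_of_mem he'
      rw [hz, add_zero]
    · have hz : gfun i j e.toProd = 0 := by
        by_contra hh
        apply hnd.1
        have : e.edge = dd.edge := by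
          rw [dart_edge, dart_edge, gfun_edge hh, gfun_edge h0]
        rw [this]
        exact List.mem_map_of_mem hmem'
      rw [hz, zero_add]
      exact ih hmem' hnd.2

section Walks
open Classical

variable (hG : ∀ ⦃a b : L ⊕ R⦄, G.Adj a b →
    (∃ i j, a = Sum.inl i ∧ b = Sum.inr j) ∨ (∃ i j, a = Sum.inr j ∧ b = Sum.inl i))

include hG

lemma sum_gfun_row [Fintype R] {a b : L ⊕ R} (h : G.Adj a b) (i : L) :
    ∑ j, gfun i j (a, b) =
      (if a = Sum.inl i then (1:ℝ) else 0) - (if b = Sum.inl i then (1:ℝ) else 0) := by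
  classical
  rcases hG h with ⟨i', j', rfl, rfl⟩ | ⟨i', j', rfl, rfl⟩
  · have : ∀ j, gfun i j (Sum.inl i', Sum.inr j') =
        if i' = i ∧ j' = j then (1:ℝ) else 0 := by
      intro j
      unfold gfun
      simp [Prod.ext_iff]
    simp only [this]
    by_cases hi : i' = i
    · subst hi
      simp
    · simp [hi, Ne.symm hi]
  · have : ∀ j, gfun i j (Sum.inr j', Sum.inl i') =
        -(if j' = j ∧ i' = i then (1:ℝ) else 0) := by
      intro j
      unfold gfun
      simp [Prod.ext_iff]
    simp only [this]
    by_cases hi : i' = i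
    · subst hi
      simp
    · simp [hi, Ne.symm hi]

lemma sum_gfun_col [Fintype L] {a b : L ⊕ R} (h : G.Adj a b) (j : R) :
    ∑ i, gfun i j (a, b) =
      (if b = Sum.inr j then (1:ℝ) else 0) - (if a = Sum.inr j then (1:ℝ) else 0) := by
  classical
  rcases hG h with ⟨i', j', rfl, rfl⟩ | ⟨i', j', rfl, rfl⟩
  · have : ∀ i, gfun i j (Sum.inl i', Sum.inr j') =
        if i' = i ∧ j' = j then (1:ℝ) else 0 := by
      intro i
      unfold gfun
      simp [Prod.ext_iff]
    simp only [this]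
    by_cases hj : j' = j
    · subst hj
      simp
    · simp [hj, Ne.symm hj]
  · have : ∀ i, gfun i j (Sum.inr j', Sum.inl i') =
        -(if j' = j ∧ i' = i then (1:ℝ) else 0) := by
      intro i
      unfold gfun
      simp [Prod.ext_iff]
    simp only [this]
    by_cases hj : j' = j
    · subst hj
      simp
    · simp [hj, Ne.symm hj]

lemma walk_row_sum [Fintype R] {a b : L ⊕ R} (p : G.Walk a b) (i : L) :
    ∑ j, lsum i j p.darts =
      (if a = Sum.inl i then (1:ℝ) else 0) - (if b = Sum.inl i then (1:ℝ) else 0) := by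
  classical
  induction p with
  | nil => simp [lsum]
  | cons h p ih =>
    simp only [SimpleGraph.Walk.darts_cons, lsum_cons, Finset.sum_add_distrib, ih]
    rw [sum_gfun_row hG h i]
    ring

lemma walk_col_sum [Fintype L] {a b : L ⊕ R} (p : G.Walk a b) (j : R) :
    ∑ i, lsum i j p.darts =
      (if b = Sum.inr j then (1:ℝ) else 0) - (if a = Sum.inr j then (1:ℝ) else 0) := by
  classical
  induction p with
  | nil => simp [lsum]
  | cons h p ih =>
    simp only [SimpleGraph.Walk.darts_cons, lsum_cons, Finset.sum_add_distrib, ih]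
    rw [sum_gfun_col hG h j]
    ring

end Walks

section Build

variable [Fintype L] [Fintype R]

open Classical in
noncomputable def supp (x : L → R → ℝ) : Finset (L × R) :=
  univ.filter (fun p => 0 < x p.1 p.2)

lemma build (x : L → R → ℝ) (hx : ∀ i j, 0 ≤ x i j) (c : L → R → ℝ) (d : L → R → ℝ)
    (h1 : ∀ i j, d i j = 0 ∨ d i j = 1 ∨ d i j = -1)
    (h2 : ∀ i j, d i j ≠ 0 → 0 < x i j)
    (h3 : ∀ i, ∑ j, d i j = 0) (h4 : ∀ j, ∑ i, d i j = 0)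
    (h5 : ∃ i j, d i j = -1)
    (h6 : 0 ≤ ∑ i, ∑ j, d i j * c i j) :
    ∃ x'' : L → R → ℝ, (∀ i j, 0 ≤ x'' i j) ∧
      (∑ i, ∑ j, x i j * c i j) ≤ (∑ i, ∑ j, x'' i j * c i j) ∧
      (∀ i, ∑ j, x'' i j = ∑ j, x i j) ∧
      (∀ j, ∑ i, x'' i j = ∑ i, x i j) ∧
      (supp x'').card < (supp x).card := by
  classical
  set T : Finset (L × R) := univ.filter (fun p => d p.1 p.2 = -1) with hT
  have hTne : T.Nonempty := by
    obtain ⟨i, j, hij⟩ := h5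
    exact ⟨(i, j), by simp [hT, hij]⟩
  obtain ⟨p0, hp0T, hp0min⟩ := T.exists_min_image (fun p => x p.1 p.2) hTne
  have hdp0 : d p0.1 p0.2 = -1 := by
    have := (Finset.mem_filter.mp hp0T).2
    exact this
  set ε := x p0.1 p0.2 with hε
  have hεpos : 0 < ε := h2 _ _ (by rw [hdp0]; norm_num)
  have hx''pos : ∀ i j, 0 < x i j + ε * d i j → 0 < x i j := by
    intro i j hij
    rcases h1 i j with h | h | h
    · rwa [h, mul_zero, add_zero] at hij
    · exact h2 i j (by rw [h]; norm_num)
    · have hT' : (i, j) ∈ T := by simp [hT, h]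
      have := hp0min _ hT'
      rw [h] at hij
      simp only at this
      linarith
  refine ⟨fun i j => x i j + ε * d i j, ?_, ?_, ?_, ?_, ?_⟩
  · intro i j
    show 0 ≤ x i j + ε * d i j
    rcases h1 i j with h | h | h
    · rw [h, mul_zero, add_zero]; exact hx i j
    · rw [h, mul_one]; have := hx i j; linarith
    · have hT' : (i, j) ∈ T := by simp [hT, h]
      have := hp0min _ hT'
      rw [h]
      simp only at this
      linarith
  · have hexp : ∀ i j, (x i j + ε * d i j) * c i j = x i j * c i j + ε * (d i j * c i j) := by
      intros; ring
    simp only [hexp, Finset.sum_add_distrib, ← Finset.mul_sum]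
    have : 0 ≤ ε * ∑ i, ∑ j, d i j * c i j := mul_nonneg hεpos.le h6
    linarith
  · intro i
    simp only [Finset.sum_add_distrib, ← Finset.mul_sum, h3 i, mul_zero, add_zero]
  · intro j
    simp only [Finset.sum_add_distrib, ← Finset.mul_sum, h4 j, mul_zero, add_zero]
  · apply Finset.card_lt_card
    rw [Finset.ssubset_iff_of_subset]
    · refine ⟨p0, ?_, ?_⟩
      · simp only [supp, Finset.mem_filter, Finset.mem_univ, true_and]
        exact hεpos
      · simp only [supp, Finset.mem_filter, Finset.mem_univ, true_and, hdp0]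
        intro hcon
        linarith
    · intro p hp
      simp only [supp, Finset.mem_filter, Finset.mem_univ, true_and] at hp ⊢
      exact hx''pos p.1 p.2 hp

lemma gfun_eval1 (i : L) (j : R) : gfun i j (Sum.inl i, Sum.inr j) = 1 := by
  classical
  unfold gfun
  have h2 : ((Sum.inl i : L ⊕ R), (Sum.inr j : L ⊕ R)) ≠ (Sum.inr j, Sum.inl i) := by
    intro hh
    exact Sum.inl_ne_inr (Prod.ext_iff.mp hh).1
  simp [h2]

lemma gfun_eval2 (i : L) (j : R) : gfun i j (Sum.inr j, Sum.inl i) = -1 := by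
  classical
  unfold gfun
  have h2 : ((Sum.inr j : L ⊕ R), (Sum.inl i : L ⊕ R)) ≠ (Sum.inl i, Sum.inr j) := by
    intro hh
    exact Sum.inr_ne_inl (Prod.ext_iff.mp hh).1
  simp [h2]

lemma step (x : L → R → ℝ) (hx : ∀ i j, 0 ≤ x i j) (c : L → R → ℝ)
    (hcyc : ¬ (SimpleGraph.fromRel
      (fun (a b : L ⊕ R) => ∃ i j, a = Sum.inl i ∧ b = Sum.inr j ∧ 0 < x i j)).IsAcyclic) :
    ∃ x'' : L → R → ℝ, (∀ i j, 0 ≤ x'' i j) ∧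
      (∑ i, ∑ j, x i j * c i j) ≤ (∑ i, ∑ j, x'' i j * c i j) ∧
      (∀ i, ∑ j, x'' i j = ∑ j, x i j) ∧
      (∀ j, ∑ i, x'' i j = ∑ i, x i j) ∧
      (supp x'').card < (supp x).card := by
  classical
  set r : (L ⊕ R) → (L ⊕ R) → Prop :=
    fun a b => ∃ i j, a = Sum.inl i ∧ b = Sum.inr j ∧ 0 < x i j with hr
  set G := SimpleGraph.fromRel r with hGdef
  -- bipartite structure of adjacency
  have hG : ∀ ⦃a b : L ⊕ R⦄, G.Adj a b →
      (∃ i j, a = Sum.inl i ∧ b = Sum.inr j) ∨ (∃ i j, a = Sum.inr j ∧ b = Sum.inl i) := by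
    intro a b hab
    rw [hGdef, SimpleGraph.fromRel_adj] at hab
    rcases hab.2 with ⟨i, j, h1, h2, _⟩ | ⟨i, j, h1, h2, _⟩
    · exact Or.inl ⟨i, j, h1, h2⟩
    · exact Or.inr ⟨i, j, h2, h1⟩
  have hGpos : ∀ ⦃a b : L ⊕ R⦄, G.Adj a b → ∀ i j,
      a = Sum.inl i → b = Sum.inr j → 0 < x i j := by
    intro a b hab i j ha hb
    rw [hGdef, SimpleGraph.fromRel_adj] at hab
    rcases hab.2 with ⟨i', j', h1, h2, h3⟩ | ⟨i', j', h1, h2, h3⟩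
    · rw [ha] at h1; rw [hb] at h2
      rw [Sum.inl.injEq] at h1; rw [Sum.inr.injEq] at h2
      rwa [← h1, ← h2] at h3
    · rw [ha] at h2; rw [hb] at h1
      exact absurd h1 (by simp)
  -- obtain a cycle
  rw [SimpleGraph.IsAcyclic] at hcyc
  push_neg at hcyc
  obtain ⟨v, w, hw⟩ := hcyc
  have htrail : (w.darts.map SimpleGraph.Dart.edge).Nodup :=
    hw.isCircuit.isTrail.edges_nodup
  set d : L → R → ℝ := fun i j => lsum i j w.darts with hd
  -- trichotomy
  have h1 : ∀ i j, d i j = 0 ∨ d i j = 1 ∨ d i j = -1 :=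
    fun i j => lsum_trichotomy i j w.darts htrail
  -- support
  have h2 : ∀ i j, d i j ≠ 0 → 0 < x i j := by
    intro i j hne
    have hex : ∃ dd ∈ w.darts, gfun i j dd.toProd ≠ 0 := by
      by_contra hcon
      push_neg at hcon
      apply hne
      rw [hd]
      simp only [lsum]
      apply List.sum_eq_zero
      intro y hy
      rw [List.mem_map] at hy
      obtain ⟨dd, hdd, rfl⟩ := hy
      exact hcon dd hdd
    obtain ⟨dd, hdd, hne'⟩ := hex
    rcases gfun_ne_zero hne' with ⟨heq, _⟩ | ⟨heq, _⟩
    · have := dd.adj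
      rw [heq] at this
      exact hGpos this i j rfl rfl
    · have := dd.adj
      rw [heq] at this
      exact hGpos this.symm i j rfl rfl
  -- row and column sums
  have h3 : ∀ i, ∑ j, d i j = 0 := by
    intro i
    rw [hd]
    simp only
    rw [walk_row_sum hG w i]
    ring
  have h4 : ∀ j, ∑ i, d i j = 0 := by
    intro j
    rw [hd]
    simp only
    rw [walk_col_sum hG w j]
    ring
  -- a nonzero entry exists
  have hne : ∃ i j, d i j ≠ 0 := by
    have hlen : w.darts ≠ [] := by
      intro hnil
      have := hw.three_le_length
      rw [← SimpleGraph.Walk.length_darts, hnil] at this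
      simp at this
    obtain ⟨dd, hdd⟩ := List.exists_mem_of_ne_nil _ hlen
    rcases hG dd.adj with ⟨i, j, hij⟩ | ⟨i, j, hij⟩
    · refine ⟨i, j, ?_⟩
      have hprod : dd.toProd = (Sum.inl i, Sum.inr j) := Prod.ext hij.1 hij.2
      have : gfun i j dd.toProd = 1 := by rw [hprod]; exact gfun_eval1 i j
      rw [hd]
      simp only
      rw [lsum_eq_of_mem hdd htrail (by rw [this]; norm_num), this]
      norm_num
    · refine ⟨i, j, ?_⟩
      have hprod : dd.toProd = (Sum.inr j, Sum.inl i) := Prod.ext hij.1 hij.2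
      have : gfun i j dd.toProd = -1 := by rw [hprod]; exact gfun_eval2 i j
      rw [hd]
      simp only
      rw [lsum_eq_of_mem hdd htrail (by rw [this]; norm_num), this]
      norm_num
  -- both signs occur
  obtain ⟨i0, j0, hne0⟩ := hne
  have hsigns : (∃ i j, d i j = -1) ∧ (∃ i j, d i j = 1) := by
    constructor
    · by_contra hcon
      push_neg at hcon
      have hnn : ∀ j ∈ (univ : Finset R), 0 ≤ d i0 j := by
        intro j _
        rcases h1 i0 j with h | h | h
        · rw [h]
        · rw [h]; norm_num
        · exact absurd h (hcon i0 j)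
      rcases h1 i0 j0 with h | h | h
      · exact hne0 h
      · have := Finset.single_le_sum hnn (Finset.mem_univ j0)
        rw [h3 i0, h] at this
        linarith
      · exact absurd h (hcon i0 j0)
    · by_contra hcon
      push_neg at hcon
      have hnn : ∀ j ∈ (univ : Finset R), 0 ≤ -d i0 j := by
        intro j _
        rcases h1 i0 j with h | h | h
        · rw [h]; norm_num
        · exact absurd h (hcon i0 j)
        · rw [h]; norm_num
      rcases h1 i0 j0 with h | h | h
      · exact hne0 h
      · exact absurd h (hcon i0 j0)
      · have := Finset.single_le_sum hnn (Finset.mem_univ j0)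
        have hsum : ∑ j, -d i0 j = 0 := by
          rw [Finset.sum_neg_distrib, h3 i0, neg_zero]
        rw [hsum, h] at this
        linarith
  rcases le_total 0 (∑ i, ∑ j, d i j * c i j) with hδ | hδ
  · exact build x hx c d h1 h2 h3 h4 hsigns.1 hδ
  · refine build x hx c (fun i j => -d i j) ?_ ?_ ?_ ?_ ?_ ?_
    · intro i j
      show -d i j = 0 ∨ -d i j = 1 ∨ -d i j = -1
      rcases h1 i j with h | h | h
      · left; rw [h, neg_zero]
      · right; right; rw [h]
      · right; left; rw [h]; norm_num
    · intro i j hij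
      exact h2 i j (by simpa using hij)
    · intro i
      show ∑ j, -d i j = 0
      rw [Finset.sum_neg_distrib, h3 i, neg_zero]
    · intro j
      show ∑ i, -d i j = 0
      rw [Finset.sum_neg_distrib, h4 j, neg_zero]
    · obtain ⟨i, j, hij⟩ := hsigns.2
      exact ⟨i, j, show -d i j = -1 by rw [hij]⟩
    · have : ∀ i j, -d i j * c i j = -(d i j * c i j) := by intros; ring
      simp only [this, Finset.sum_neg_distrib]
      linarith

end Build

section Main

variable [Fintype L] [Fintype R]

lemma main : ∀ (n : ℕ) (x : L → R → ℝ), (supp x).card ≤ n → (∀ i j, 0 ≤ x i j) →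
    ∀ c : L → R → ℝ,
    ∃ x' : L → R → ℝ,
      (∀ i j, 0 ≤ x' i j) ∧
      (∑ i, ∑ j, x i j * c i j) ≤ (∑ i, ∑ j, x' i j * c i j) ∧
      (∀ i, ∑ j, x' i j = ∑ j, x i j) ∧
      (∀ j, ∑ i, x' i j = ∑ i, x i j) ∧
      (SimpleGraph.fromRel
        (fun (a b : L ⊕ R) => ∃ i j, a = Sum.inl i ∧ b = Sum.inr j ∧ 0 < x' i j)).IsAcyclic := by
  intro n
  induction n using Nat.strong_induction_on with
  | _ n ih =>
    intro x hcard hx c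
    by_cases hac : (SimpleGraph.fromRel
        (fun (a b : L ⊕ R) => ∃ i j, a = Sum.inl i ∧ b = Sum.inr j ∧ 0 < x i j)).IsAcyclic
    · exact ⟨x, hx, le_refl _, fun i => rfl, fun j => rfl, hac⟩
    · obtain ⟨x'', hnn, hcost, hrow, hcol, hlt⟩ := step x hx c hac
      have hlt' : (supp x'').card < n := lt_of_lt_of_le hlt hcard
      obtain ⟨x', h1, h2, h3, h4, h5⟩ := ih _ hlt' x'' le_rfl hnn c
      refine ⟨x', h1, le_trans hcost h2, ?_, ?_, h5⟩
      · intro i; rw [h3 i, hrow i]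
      · intro j; rw [h4 j, hcol j]

end Main

end Stmt3Aux

open Stmt3Aux in
theorem stmt3 {L R : Type} [Fintype L] [Fintype R] (x : L → R → ℝ)
    (hx : ∀ i j, 0 ≤ x i j) (c : L → R → ℝ) :
    ∃ x' : L → R → ℝ,
      (∀ i j, 0 ≤ x' i j) ∧
      (∑ i, ∑ j, x i j * c i j) ≤ (∑ i, ∑ j, x' i j * c i j) ∧
      (∀ i, ∑ j, x' i j = ∑ j, x i j) ∧
      (∀ j, ∑ i, x' i j = ∑ i, x i j) ∧
      (SimpleGraph.fromRel
        (fun (a b : L ⊕ R) => ∃ i j, a = Sum.inl i ∧ b = Sum.inr j ∧ 0 < x' i j)).IsAcyclic := by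
  exact main (supp x).card x le_rfl hx c
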